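/- For every real number 0 < q < 1, every positive integer k, and all real s, t > 0, the q,k-beta function B_{q,k}(t,s) = Γ_{q,k}(t)Γ_{q,k}(s)/Γ_{q,k}(t+s) satisfies the closed formula B_{q,k}(t,s) = (1-q) · (1-q^k)_{q^k}^{s/k - 1} / (1-q^t)_{q^k}^{s/k}; explicitly, B_{q,k}(t,s) = (1-q) · ∏_{j=0}^∞ (1-q^{k(j+1)})/(1-q^{s+jk}) · ∏_{j=0}^∞ (1-q^{t+s+jk})/(1-q^{t+jk}). -/

import Mathlib

open Real Filter


/-- The q,k-gamma function
Γ_{q,k}(t) = (1-q)^(1-t/k) · ∏_{j=0}^∞ (1-q^{k(j+1)})/(1-q^{t+jk}). -/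
noncomputable def qkGamma (q : ℝ) (k : ℕ) (t : ℝ) : ℝ :=
  (1 - q) ^ (1 - t / (k : ℝ)) *
    ∏' j : ℕ, (1 - q ^ ((k : ℝ) * ((j : ℝ) + 1))) / (1 - q ^ (t + (j : ℝ) * (k : ℝ)))

/-- The q,k-beta function B_{q,k}(t,s) = Γ_{q,k}(t)Γ_{q,k}(s)/Γ_{q,k}(t+s). -/
noncomputable def qkBeta (q : ℝ) (k : ℕ) (t s : ℝ) : ℝ :=
  qkGamma q k t * qkGamma q k s / qkGamma q k (t + s)

/-- The q^k-power (1+x)_{q^k}^s = ∏_{j=0}^∞ (1+q^{jk}x)/(1+q^{k(s+j)}x). -/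
noncomputable def qkPow (q : ℝ) (k : ℕ) (x s : ℝ) : ℝ :=
  ∏' j : ℕ, (1 + q ^ ((j : ℝ) * (k : ℝ)) * x) / (1 + q ^ ((k : ℝ) * (s + (j : ℝ))) * x)


lemma hasProd_of_summable_log {f : ℕ → ℝ} (hf : ∀ j, 0 < f j)
    (h : Summable fun j => Real.log (f j)) :
    HasProd f (Real.exp (∑' j, Real.log (f j))) := by
  have hS := h.hasSum
  have : Tendsto (fun A : Finset ℕ => Real.exp (∑ j ∈ A, Real.log (f j))) atTop
      (nhds (Real.exp (∑' j, Real.log (f j)))) := (Real.continuous_exp.tendsto _).comp hS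
  refine this.congr fun A => ?_
  rw [Real.exp_sum]
  exact Finset.prod_congr rfl fun j _ => Real.exp_log (hf j)

lemma summable_log_one_sub {c r : ℝ} (hc0 : 0 < c) (hr0 : 0 < r) (hr1 : r < 1) :
    Summable fun j : ℕ => Real.log (1 - c * r ^ j) := by
  have hx0 : ∀ j : ℕ, 0 < c * r ^ j := fun j => mul_pos hc0 (pow_pos hr0 j)
  have hsum : Summable fun j : ℕ => 2 * (c * r ^ j) :=
    ((summable_geometric_of_lt_one hr0.le hr1).mul_left c).mul_left 2
  have htend : Tendsto (fun j : ℕ => c * r ^ j) atTop (nhds 0) := by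
    simpa using (tendsto_pow_atTop_nhds_zero_of_lt_one hr0.le hr1).const_mul c
  refine hsum.of_norm_bounded_eventually_nat ?_
  filter_upwards [htend.eventually_lt_const (by norm_num : (0:ℝ) < 1/2)] with j hj
  set x := c * r ^ j with hxdef
  have hx1 : 0 < 1 - x := by linarith
  have hup : Real.log (1 - x) ≤ 0 := Real.log_nonpos (by linarith [hx0 j]) (by linarith [hx0 j])
  have hlow : -Real.log (1 - x) ≤ (1 - x)⁻¹ - 1 := by
    have := Real.log_le_sub_one_of_pos (inv_pos.2 hx1)
    rwa [Real.log_inv] at this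
  have hinv : (1 - x) * (1 - x)⁻¹ = 1 := mul_inv_cancel₀ hx1.ne'
  rw [Real.norm_eq_abs, abs_of_nonpos hup]
  nlinarith [hx0 j, hj]

section
variable {q : ℝ} {k : ℕ}

lemma rpow_term_eq (hq0 : 0 < q) (a : ℝ) (j : ℕ) :
    q ^ (a + (j : ℝ) * (k : ℝ)) = q ^ a * (q ^ (k : ℝ)) ^ j := by
  rw [Real.rpow_add hq0, mul_comm (j : ℝ) (k : ℝ), Real.rpow_mul hq0.le,
    Real.rpow_natCast]

lemma term_lt_one (hq0 : 0 < q) (hq1 : q < 1) (hk : 0 < k) {a : ℝ} (ha : 0 < a) (j : ℕ) :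
    q ^ (a + (j : ℝ) * (k : ℝ)) < 1 := by
  have hkR : (0:ℝ) < k := by exact_mod_cast hk
  have he : 0 < a + (j : ℝ) * (k : ℝ) := by positivity
  exact Real.rpow_lt_one hq0.le hq1 he

lemma one_sub_term_pos (hq0 : 0 < q) (hq1 : q < 1) (hk : 0 < k) {a : ℝ} (ha : 0 < a) (j : ℕ) :
    0 < 1 - q ^ (a + (j : ℝ) * (k : ℝ)) := by
  linarith [term_lt_one hq0 hq1 hk ha j]

lemma summable_log_g (hq0 : 0 < q) (hq1 : q < 1) (hk : 0 < k) {a : ℝ} (ha : 0 < a) :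
    Summable fun j : ℕ => Real.log (1 - q ^ (a + (j : ℝ) * (k : ℝ))) := by
  have hkR : (0:ℝ) < k := by exact_mod_cast hk
  have hr0 : 0 < q ^ (k : ℝ) := Real.rpow_pos_of_pos hq0 _
  have hr1 : q ^ (k : ℝ) < 1 := Real.rpow_lt_one hq0.le hq1 hkR
  have hc0 : 0 < q ^ a := Real.rpow_pos_of_pos hq0 _
  exact (summable_log_one_sub hc0 hr0 hr1).congr fun j => by rw [← rpow_term_eq hq0]

lemma hasProd_quot (hq0 : 0 < q) (hq1 : q < 1) (hk : 0 < k) {a b : ℝ} (ha : 0 < a) (hb : 0 < b) :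
    ∃ c : ℝ, 0 < c ∧
      HasProd (fun j : ℕ =>
        (1 - q ^ (a + (j : ℝ) * (k : ℝ))) / (1 - q ^ (b + (j : ℝ) * (k : ℝ)))) c := by
  have hfa := one_sub_term_pos hq0 hq1 hk ha
  have hfb := one_sub_term_pos hq0 hq1 hk hb
  have hpos : ∀ j : ℕ,
      0 < (1 - q ^ (a + (j : ℝ) * (k : ℝ))) / (1 - q ^ (b + (j : ℝ) * (k : ℝ))) :=
    fun j => div_pos (hfa j) (hfb j)
  have hsum : Summable fun j : ℕ =>
      Real.log ((1 - q ^ (a + (j : ℝ) * (k : ℝ))) / (1 - q ^ (b + (j : ℝ) * (k : ℝ)))) := by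
    refine ((summable_log_g hq0 hq1 hk ha).sub (summable_log_g hq0 hq1 hk hb)).congr fun j => ?_
    rw [Real.log_div (hfa j).ne' (hfb j).ne']
  exact ⟨_, Real.exp_pos _, hasProd_of_summable_log hpos hsum⟩

end

theorem qkBeta_closed_formula (q : ℝ) (hq0 : 0 < q) (hq1 : q < 1)
    (k : ℕ) (hk : 0 < k) (t s : ℝ) (ht : 0 < t) (hs : 0 < s) :
    qkBeta q k t s =
      (1 - q) * qkPow q k (-(q ^ k)) (s / (k : ℝ) - 1) / qkPow q k (-(q ^ t)) (s / (k : ℝ)) ∧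
    qkBeta q k t s =
      (1 - q) * (∏' j : ℕ, (1 - q ^ ((k : ℝ) * ((j : ℝ) + 1))) / (1 - q ^ (s + (j : ℝ) * (k : ℝ)))) *
        ∏' j : ℕ, (1 - q ^ (t + s + (j : ℝ) * (k : ℝ))) / (1 - q ^ (t + (j : ℝ) * (k : ℝ))) := by
  have hkR : (0:ℝ) < k := by exact_mod_cast hk
  have hkne : (k:ℝ) ≠ 0 := hkR.ne'
  have hts : 0 < t + s := by linarith
  have hc : (0:ℝ) < 1 - q := by linarith
  obtain ⟨A, hApos, hA⟩ := hasProd_quot hq0 hq1 hk hkR ht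
  obtain ⟨B, hBpos, hB⟩ := hasProd_quot hq0 hq1 hk hkR hs
  obtain ⟨C, hCpos, hC⟩ := hasProd_quot hq0 hq1 hk hkR hts
  obtain ⟨Q, hQpos, hQ⟩ := hasProd_quot hq0 hq1 hk hts ht
  obtain ⟨Q', hQ'pos, hQ'⟩ := hasProd_quot hq0 hq1 hk ht hts
  have hne := fun (a : ℝ) (ha : 0 < a) (j : ℕ) => (one_sub_term_pos hq0 hq1 hk ha j).ne'
  -- A = C * Q
  have hACQ : A = C * Q := by
    refine hA.unique ?_
    have := hC.mul hQ
    refine HasProd.congr_fun this fun j => ?_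
    field_simp [hne _ hts j, hne _ ht j]
    rw [mul_div_mul_right _ _ (by rw [mul_comm (k:ℝ) (j:ℝ)]; exact hne _ hts j)]
  -- Q * Q' = 1
  have hQQ' : Q * Q' = 1 := by
    have h1 : HasProd (fun _ : ℕ => (1:ℝ)) (Q * Q') := by
      refine HasProd.congr_fun (hQ.mul hQ') fun j => ?_
      rw [div_mul_div_comm, mul_comm (1 - q ^ (t + (j:ℝ) * (k:ℝ)))]
      exact (div_self (mul_ne_zero (hne _ hts j) (hne _ ht j))).symm
    exact h1.unique hasProd_one
  -- Gamma values
  have hGt : qkGamma q k t = (1 - q) ^ (1 - t / (k:ℝ)) * A := by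
    rw [qkGamma, ← hA.tprod_eq]
    congr 1
    exact tprod_congr fun j => by
      rw [show (k:ℝ) * ((j:ℝ) + 1) = (k:ℝ) + (j:ℝ) * (k:ℝ) by ring]
  have hGs : qkGamma q k s = (1 - q) ^ (1 - s / (k:ℝ)) * B := by
    rw [qkGamma, ← hB.tprod_eq]
    congr 1
    exact tprod_congr fun j => by
      rw [show (k:ℝ) * ((j:ℝ) + 1) = (k:ℝ) + (j:ℝ) * (k:ℝ) by ring]
  have hGts : qkGamma q k (t + s) = (1 - q) ^ (1 - (t + s) / (k:ℝ)) * C := by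
    rw [qkGamma, ← hC.tprod_eq]
    congr 1
    exact tprod_congr fun j => by
      rw [show (k:ℝ) * ((j:ℝ) + 1) = (k:ℝ) + (j:ℝ) * (k:ℝ) by ring]
  have h3 : (0:ℝ) < (1 - q) ^ (1 - (t + s) / (k:ℝ)) := Real.rpow_pos_of_pos hc _
  have hrw : (1 - q) ^ (1 - t / (k:ℝ)) * (1 - q) ^ (1 - s / (k:ℝ))
      = (1 - q) * (1 - q) ^ (1 - (t + s) / (k:ℝ)) := by
    rw [← Real.rpow_add hc, show (1 - t / (k:ℝ)) + (1 - s / (k:ℝ))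
        = 1 + (1 - (t + s) / (k:ℝ)) by rw [add_div]; ring, Real.rpow_add hc, Real.rpow_one]
  have hbeta : qkBeta q k t s = (1 - q) * (A * B / C) := by
    rw [qkBeta, hGt, hGs, hGts]
    rw [show (1 - q) ^ (1 - t / (k:ℝ)) * A * ((1 - q) ^ (1 - s / (k:ℝ)) * B)
        = ((1 - q) ^ (1 - t / (k:ℝ)) * (1 - q) ^ (1 - s / (k:ℝ))) * (A * B) by ring, hrw]
    field_simp
  have hbeta2 : qkBeta q k t s = (1 - q) * B * Q := by
    rw [hbeta, hACQ]
    field_simp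
  constructor
  · -- first formula
    have hP1 : qkPow q k (-(q ^ k)) (s / (k:ℝ) - 1) = B := by
      rw [qkPow, ← hB.tprod_eq]
      exact tprod_congr fun j => by
        rw [← Real.rpow_natCast q k, mul_neg, mul_neg, ← Real.rpow_add hq0, ← Real.rpow_add hq0,
          show (j:ℝ) * (k:ℝ) + (k:ℝ) = (k:ℝ) + (j:ℝ) * (k:ℝ) by ring,
          show (k:ℝ) * (s / (k:ℝ) - 1 + (j:ℝ)) + (k:ℝ) = s + (j:ℝ) * (k:ℝ) by
            field_simp; ring,
          ← sub_eq_add_neg, ← sub_eq_add_neg]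
    have hP2 : qkPow q k (-(q ^ t)) (s / (k:ℝ)) = Q' := by
      rw [qkPow, ← hQ'.tprod_eq]
      exact tprod_congr fun j => by
        rw [mul_neg, mul_neg, ← Real.rpow_add hq0, ← Real.rpow_add hq0,
          show (j:ℝ) * (k:ℝ) + t = t + (j:ℝ) * (k:ℝ) by ring,
          show (k:ℝ) * (s / (k:ℝ) + (j:ℝ)) + t = t + s + (j:ℝ) * (k:ℝ) by
            field_simp; ring,
          ← sub_eq_add_neg, ← sub_eq_add_neg]
    rw [hP1, hP2, hbeta2]
    have hQinv : Q = Q'⁻¹ := eq_inv_of_mul_eq_one_left (by linear_combination hQQ')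

    rw [hQinv, div_eq_mul_inv]
  · -- second formula
    rw [hbeta2, ← hQ.tprod_eq, ← hB.tprod_eq]
    congr 2
    exact tprod_congr fun j => by
      rw [show (k:ℝ) * ((j:ℝ) + 1) = (k:ℝ) + (j:ℝ) * (k:ℝ) by ring]
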